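/- arXiv:1511.01126 — 4 statements merged into one kernel-verified Lean document; each statement's English description precedes it below -/
import Mathlib

section
/- Let m be a squarefree rational number and let K = ℚ(√m)(√α) where α = a + b√m with a, b ∈ ℚ, a ≠ 0, b ≠ 0, and [K : ℚ] = 4. Then K/ℚ is Galois with Gal(K/ℚ) cyclic of order 4 if and only if there exist nonzero rationals a, b (after rescaling) with a²/m − b² = 1; equivalently, a² − b²m = e²m for some e ∈ ℚ. -/
/-- Criterion for a quartic field `K = ℚ(√m)(√(a + b√m))` (with `m` squarefree,
`a, b` nonzero rationals) to be Galois over `ℚ` with cyclic Galois group of order 4: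
this happens if and only if `a² - b²m = e²m` for some rational `e`. -/
theorem stmt_0 (m : ℤ) (hm : Squarefree m) (a b : ℚ) (ha : a ≠ 0) (hb : b ≠ 0)
    (K : Type) [Field K] [NumberField K] (hK4 : Module.finrank ℚ K = 4)
    (s t : K) (hs : s ^ 2 = (m : K)) (ht : t ^ 2 = (a : K) + (b : K) * s)
    (hgen : IntermediateField.adjoin ℚ {t} = (⊤ : IntermediateField ℚ K)) :
    (IsGalois ℚ K ∧ IsCyclic (K ≃ₐ[ℚ] K)) ↔
      ∃ e : ℚ, a ^ 2 - b ^ 2 * (m : ℚ) = e ^ 2 * (m : ℚ) := by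
  open Polynomial in
  have hFD : FiniteDimensional ℚ K := inferInstance
  have hint : IsIntegral ℚ t := IsIntegral.of_finite ℚ t
  have hm0 : (m : K) ≠ 0 := Int.cast_ne_zero.mpr hm.ne_zero
  have hs0 : s ≠ 0 := fun h => hm0 (by rw [← hs, h]; ring)
  have hbK : (b : K) ≠ 0 := Rat.cast_ne_zero.mpr hb
  have haK : (a : K) ≠ 0 := Rat.cast_ne_zero.mpr ha
  -- degree of minpoly is 4
  have hdeg : (minpoly ℚ t).natDegree = 4 := by
    rw [← IntermediateField.adjoin.finrank hint, hgen, IntermediateField.finrank_top', hK4]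
  -- Lemma C : t^2 is not rational
  have hC : ∀ c : ℚ, t ^ 2 ≠ (c : K) := by
    intro c hc
    have hdvd : minpoly ℚ t ∣ (Polynomial.X ^ 2 - Polynomial.C c) := by
      apply minpoly.dvd
      simp [hc]
    have h2 : (minpoly ℚ t).natDegree ≤ 2 := by
      have hne : (Polynomial.X ^ 2 - Polynomial.C c : Polynomial ℚ) ≠ 0 := by
        intro h
        have := congrArg Polynomial.natDegree h
        simp [Polynomial.natDegree_X_pow_sub_C] at this
      calc (minpoly ℚ t).natDegree ≤ (Polynomial.X ^ 2 - Polynomial.C c : Polynomial ℚ).natDegree :=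
            Polynomial.natDegree_le_of_dvd hdvd hne
        _ = 2 := Polynomial.natDegree_X_pow_sub_C
    omega
  have ht0 : t ≠ 0 := fun h => hC 0 (by rw [h]; simp)
  -- ext on t
  have hext : ∀ σ : K ≃ₐ[ℚ] K, σ t = t → σ = 1 := by
    intro σ hσt
    ext x
    have hx : x ∈ IntermediateField.adjoin ℚ {t} := hgen ▸ IntermediateField.mem_top
    induction hx using IntermediateField.adjoin_induction with
    | mem y hy => simp only [Set.mem_singleton_iff] at hy; simp [hy, hσt]
    | algebraMap y => simp
    | add y z _ _ hy hz => simp [map_add, hy, hz]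
    | inv y _ hy => simp [map_inv₀, hy]
    | mul y z _ _ hy hz => simp [map_mul, hy, hz]
  constructor
  · rintro ⟨hGal, hCyc⟩
    classical
    have hcard : Nat.card (K ≃ₐ[ℚ] K) = 4 := by
      rw [IsGalois.card_aut_eq_finrank, hK4]
    obtain ⟨σ, hσgen⟩ := hCyc.exists_generator
    have horder : orderOf σ = 4 := by
      rw [orderOf_eq_card_of_forall_mem_zpowers hσgen, hcard]
    have hσ2 : σ ^ 2 ≠ 1 := by
      intro h
      have : orderOf σ ∣ 2 := orderOf_dvd_iff_pow_eq_one.mpr h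
      rw [horder] at this
      omega
    have h2t : (σ ^ 2) t = σ (σ t) := by
      rw [pow_succ, pow_one]; rfl
    -- σ s = -s
    have hss : σ s = -s := by
      have hsq : (σ s) ^ 2 = s ^ 2 := by
        rw [← map_pow, hs, map_intCast]
      rcases sq_eq_sq_iff_eq_or_eq_neg.mp hsq with h | h
      · exfalso
        have htq : (σ t) ^ 2 = t ^ 2 := by
          rw [← map_pow, ht, map_add, map_mul, h]
          simp [ht]
        rcases sq_eq_sq_iff_eq_or_eq_neg.mp htq with h' | h'
        · exact hσ2 (hext _ (by rw [h2t, h', h']))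
        · exact hσ2 (hext _ (by rw [h2t, h', map_neg, h', neg_neg]))
      · exact h
    have hs2 : σ (σ s) = s := by rw [hss, map_neg, hss, neg_neg]
    have hσt2 : σ (σ t) ^ 2 = t ^ 2 := by
      rw [← map_pow, ← map_pow, ht, map_add, map_mul, map_add, map_mul, hs2]
      simp [ht]
    have hst2 : σ (σ t) = -t := by
      rcases sq_eq_sq_iff_eq_or_eq_neg.mp hσt2 with h' | h'
      · exact absurd (hext _ (h2t.trans h')) hσ2
      · exact h'
    set u : K := t * σ t with hu
    set w : K := u * s⁻¹ with hw
    have hσu : σ u = -u := by rw [hu, map_mul, hst2]; ring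
    have hσw : σ w = w := by
      rw [hw, map_mul, hσu, map_inv₀, hss]
      field_simp
    have hfixn : ∀ n : ℕ, (σ ^ n) w = w := by
      intro n
      induction n with
      | zero => simp
      | succ n ih => rw [pow_succ, AlgEquiv.mul_apply, hσw, ih]
    have hfix : ∀ τ : K ≃ₐ[ℚ] K, τ w = w := by
      intro τ
      obtain ⟨k, hk⟩ := hσgen τ
      rcases k with n | n
      · rw [← hk]; simpa using hfixn n
      · rw [← hk]
        show (σ ^ (Int.negSucc n)) w = w
        rw [zpow_negSucc]
        have h1 : (σ ^ (n + 1))⁻¹ ((σ ^ (n + 1)) w) = w := by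
          rw [← AlgEquiv.mul_apply, inv_mul_cancel]; rfl
        rw [hfixn (n + 1)] at h1
        exact h1
    have hwbot : w ∈ (⊥ : IntermediateField ℚ K) := by
      have hfixtop : IntermediateField.fixedField (⊤ : Subgroup (K ≃ₐ[ℚ] K)) =
          (⊥ : IntermediateField ℚ K) :=
        OrderIso.map_bot (@IsGalois.intermediateFieldEquivSubgroup ℚ _ K _ _ _ hGal).symm
      rw [← hfixtop]
      exact fun g => hfix g
    obtain ⟨e, he⟩ := IntermediateField.mem_bot.mp hwbot
    refine ⟨e, ?_⟩
    have heK : (e : K) = w := by rw [← he, eq_ratCast (algebraMap ℚ K) e]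
    have huw : u = (e : K) * s := by
      rw [heK, hw]
      field_simp
    have hσtsq : (σ t) ^ 2 = (a : K) - (b : K) * s := by
      rw [← map_pow, ht, map_add, map_mul, hss]
      simp
      ring
    have hu2 : u ^ 2 = (a : K) ^ 2 - (b : K) ^ 2 * m := by
      calc u ^ 2 = t ^ 2 * (σ t) ^ 2 := by rw [hu]; ring
        _ = ((a : K) + (b : K) * s) * ((a : K) - (b : K) * s) := by rw [ht, hσtsq]
        _ = (a : K) ^ 2 - (b : K) ^ 2 * m := by linear_combination (-(b : K) ^ 2) * hs
    have hfin : (a : K) ^ 2 - (b : K) ^ 2 * m = (e : K) ^ 2 * m := by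
      rw [← hu2, huw, mul_pow, hs]
    exact_mod_cast hfin
  · rintro ⟨e, he⟩
    classical
    -- e ≠ 0
    have he0 : e ≠ 0 := by
      intro h0
      rw [h0] at he
      -- a^2 = b^2 m, so s = ± a/b is rational, so t^2 is rational
      have habQ : a ^ 2 = b ^ 2 * (m : ℚ) := by linarith [he]
      have habK : (a : K) ^ 2 = (b : K) ^ 2 * (m : K) := by exact_mod_cast habQ
      have hab : ((a / b : ℚ) : K) ^ 2 = s ^ 2 := by
        rw [hs]
        push_cast
        field_simp
        linear_combination habK
      rcases sq_eq_sq_iff_eq_or_eq_neg.mp hab.symm with h | h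
      · exact hC (a + b * (a / b)) (by rw [ht, h]; push_cast; ring)
      · exact hC (a + b * (-(a / b))) (by rw [ht, h]; push_cast; ring)
    have heK : (e : K) ≠ 0 := Rat.cast_ne_zero.mpr he0
    have ht20 : t ^ 2 ≠ 0 := pow_ne_zero 2 ht0
    -- the conjugate square root
    obtain ⟨t', ht'⟩ : ∃ x : K, x = (e : K) * s / t := ⟨_, rfl⟩
    have htt' : t * t' = (e : K) * s := by rw [ht']; field_simp
    have ht'0 : t' ≠ 0 := by
      rw [ht']
      exact div_ne_zero (mul_ne_zero heK hs0) ht0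
    have heq : ((a : K) ^ 2 - (b : K) ^ 2 * m) = (e : K) ^ 2 * m := by
      exact_mod_cast congrArg (fun x : ℚ => (x : K)) he
    have ht'sq : t' ^ 2 = (a : K) - (b : K) * s := by
      have h1 : t ^ 2 * t' ^ 2 = t ^ 2 * ((a : K) - (b : K) * s) := by
        have h2 : (t * t') ^ 2 = (e : K) ^ 2 * s ^ 2 := by rw [htt']; ring
        rw [hs] at h2
        linear_combination h2 - heq + ((b : K) * s - (a : K)) * ht + (b : K) ^ 2 * hs
      exact mul_left_cancel₀ ht20 h1
    -- the quartic polynomial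
    set p : ℚ[X] := X ^ 4 - C (2 * a) * X ^ 2 + C (a ^ 2 - b ^ 2 * m) with hp
    have hpmonic : p.Monic := by
      rw [hp]
      monicity!
    have hpdeg : p.natDegree = 4 := by
      rw [hp]
      compute_degree!
    have hpt : Polynomial.aeval t p = 0 := by
      rw [hp]
      simp only [map_add, map_sub, map_mul, map_pow, aeval_X, aeval_C, eq_ratCast, map_intCast]
      push_cast
      linear_combination (t ^ 2 - (a : K) + (b : K) * s) * ht + (b : K) ^ 2 * hs
    have hpt' : Polynomial.aeval t' p = 0 := by
      rw [hp]
      simp only [map_add, map_sub, map_mul, map_pow, aeval_X, aeval_C, eq_ratCast, map_intCast]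
      push_cast
      linear_combination (t' ^ 2 - (a : K) - (b : K) * s) * ht'sq + (b : K) ^ 2 * hs
    -- p is the minimal polynomial of t
    have hpmin : minpoly ℚ t = p := by
      obtain ⟨q, hq⟩ := minpoly.dvd ℚ t hpt
      have hmonic := minpoly.monic hint
      have hqmonic : q.Monic := by
        have := hpmonic
        rw [hq] at this
        exact hmonic.of_mul_monic_left this
      have hqdeg : q.natDegree = 0 := by
        have := congrArg Polynomial.natDegree hq
        rw [Polynomial.natDegree_mul (minpoly.ne_zero hint) hqmonic.ne_zero, hdeg, hpdeg] at this
        omega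
      have hq1 : q = 1 := hqmonic.natDegree_eq_zero.mp hqdeg
      rw [hq, hq1, mul_one]
    -- p splits in K
    have hmap : p.map (algebraMap ℚ K) =
        (X - C t) * (X + C t) * (X - C t') * (X + C t') := by
      have e1 : t ^ 2 + t' ^ 2 = (algebraMap ℚ K) (2 * a) := by
        rw [ht, ht'sq, eq_ratCast]
        push_cast
        ring
      have e2 : t ^ 2 * t' ^ 2 = (algebraMap ℚ K) (a ^ 2 - b ^ 2 * m) := by
        rw [ht, ht'sq, eq_ratCast]
        push_cast
        linear_combination (-(b : K) ^ 2) * hs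
      rw [hp]
      simp only [Polynomial.map_add, Polynomial.map_sub, Polynomial.map_mul, Polynomial.map_pow,
        Polynomial.map_X, Polynomial.map_C]
      rw [← e1, ← e2]
      simp only [map_add, map_mul, map_pow]
      ring
    have hsplits : (p.map (algebraMap ℚ K)).Splits := by
      rw [hmap]
      repeat
        apply Polynomial.Splits.mul
      · exact Polynomial.Splits.X_sub_C _
      · rw [show (X + C t : K[X]) = X - C (-t) by rw [map_neg, sub_neg_eq_add]]
        exact Polynomial.Splits.X_sub_C _
      · exact Polynomial.Splits.X_sub_C _
      · rw [show (X + C t' : K[X]) = X - C (-t') by rw [map_neg, sub_neg_eq_add]]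
        exact Polynomial.Splits.X_sub_C _
    have hadj : Algebra.adjoin ℚ (p.rootSet K) = ⊤ := by
      rw [eq_top_iff]
      have h1 : Algebra.adjoin ℚ ({t} : Set K) = ⊤ := by
        have h2 := IntermediateField.adjoin_simple_toSubalgebra_of_isAlgebraic hint.isAlgebraic
        rw [hgen, IntermediateField.top_toSubalgebra] at h2
        exact h2.symm
      rw [← h1]
      apply Algebra.adjoin_mono
      rw [Set.singleton_subset_iff, Polynomial.mem_rootSet]
      exact ⟨hpmonic.ne_zero, hpt⟩
    haveI hsf : Polynomial.IsSplittingField ℚ K p := ⟨hsplits, hadj⟩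
    have hsep : p.Separable := by
      rw [← hpmin]
      exact (minpoly.irreducible hint).separable
    have hGal : IsGalois ℚ K := IsGalois.of_separable_splitting_field hsep
    refine ⟨hGal, ?_⟩
    -- construct the order-4 automorphism
    let pb : PowerBasis ℚ K := (IntermediateField.adjoin.powerBasis hint).map
      ((IntermediateField.equivOfEq hgen).trans IntermediateField.topEquiv)
    have hgenpb : pb.gen = t := rfl
    have hroot : Polynomial.aeval t' (minpoly ℚ pb.gen) = 0 := by
      rw [hgenpb, hpmin]; exact hpt'
    let σ0 : K →ₐ[ℚ] K := pb.lift t' hroot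
    have hσ0t : σ0 t = t' := by
      have := pb.lift_gen t' hroot
      rwa [hgenpb] at this
    haveI : Algebra.IsAlgebraic ℚ K := Algebra.IsAlgebraic.of_finite ℚ K
    let σ : K ≃ₐ[ℚ] K := AlgEquiv.ofBijective σ0 (Algebra.IsAlgebraic.algHom_bijective σ0)
    have hσt : σ t = t' := hσ0t
    -- σ s = -s
    have hσs : σ s = -s := by
      have h2 : σ ((b : K) * s) = (b : K) * σ s := by rw [map_mul, map_ratCast]
      have h3 : σ ((b : K) * s) = -((b : K) * s) := by
        have h4 : (b : K) * s = t ^ 2 - (a : K) := by rw [ht]; ring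
        rw [h4, map_sub, map_pow, map_ratCast, hσt, ht'sq]
        linear_combination ht
      apply mul_left_cancel₀ hbK
      rw [← h2, h3]
      ring
    have hσt' : σ t' = -t := by
      have h5 : σ (t * t') = t' * σ t' := by rw [map_mul, hσt]
      have h6 : σ ((e : K) * s) = -((e : K) * s) := by
        rw [map_mul, map_ratCast, hσs]; ring
      have h7 : t' * σ t' = -(t * t') := by rw [← h5, htt', h6, ← htt']
      apply mul_left_cancel₀ ht'0
      rw [h7]
      ring
    have hcard : Fintype.card (K ≃ₐ[ℚ] K) = 4 := by
      rw [← Nat.card_eq_fintype_card, IsGalois.card_aut_eq_finrank, hK4]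
    have hne : σ ^ 2 ≠ 1 := by
      intro h
      have h8 : (σ ^ 2) t = t := by rw [h]; rfl
      rw [pow_succ, pow_one, AlgEquiv.mul_apply, hσt, hσt'] at h8
      apply ht0
      have h9 : (2 : K) * t = 0 := by linear_combination -h8
      rcases mul_eq_zero.mp h9 with h10 | h10
      · exact absurd h10 two_ne_zero
      · exact h10
    have hdvd : orderOf σ ∣ 4 := by
      rw [← hcard]
      exact orderOf_dvd_card
    have hord : orderOf σ = 4 := by
      have hnd2 : ¬ orderOf σ ∣ 2 := fun h => hne (orderOf_dvd_iff_pow_eq_one.mp h)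
      have h4 : orderOf σ ∣ 2 ^ 2 := by norm_num; exact hdvd
      obtain ⟨k, hk, hkeq⟩ := (Nat.dvd_prime_pow Nat.prime_two).mp h4
      interval_cases k
      · exact absurd (by rw [hkeq]; norm_num) hnd2
      · exact absurd (by rw [hkeq]; norm_num) hnd2
      · rw [hkeq]; norm_num
    exact isCyclic_of_orderOf_eq_card σ (by rw [hord, Nat.card_eq_fintype_card, hcard])
end

section
/- Let K be a cyclic quartic extension of ℚ. Then ℚ(i) is not contained in K and ℚ(√−3) is not contained in K. -/
open NumberField

/-- In a cyclic group of order 4, every element of order dividing 2 is a square. -/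
lemma sq_of_cyclic (G : Type*) [Group G] [Fintype G] (hc : IsCyclic G)
    (hcard : Fintype.card G = 4) (σ : G) (hσ : σ ^ 2 = 1) : ∃ τ : G, τ ^ 2 = σ := by
  obtain ⟨g, hg⟩ := hc.exists_generator
  have hog : orderOf g = 4 := by
    rw [orderOf_eq_card_of_forall_mem_zpowers hg, Nat.card_eq_fintype_card, hcard]
  obtain ⟨k, hk⟩ := hg σ
  simp only [] at hk
  have h2k : g ^ (2 * k) = 1 := by
    rw [mul_comm, zpow_mul, hk]
    exact_mod_cast hσ
  have hdvd : ((orderOf g : ℤ)) ∣ 2 * k := orderOf_dvd_iff_zpow_eq_one.mpr h2k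
  rw [hog] at hdvd
  obtain ⟨m, hm⟩ : (2 : ℤ) ∣ k := by omega
  exact ⟨g ^ m, by rw [← hk, hm, ← zpow_natCast, ← zpow_mul]; ring_nf⟩

lemma key (K : Type) [Field K] [NumberField K] (h4 : Module.finrank ℚ K = 4)
    [IsGalois ℚ K] (hcyc : IsCyclic (K ≃ₐ[ℚ] K)) (d : ℚ) (hd : 0 < d) (x : K)
    (hx : x ^ 2 = algebraMap ℚ K (-d)) : False := by
  -- an embedding of K into ℂ
  let φA : K →ₐ[ℚ] ℂ := IsAlgClosed.lift
  let φ : K →+* ℂ := φA.toRingHom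
  -- φ x is purely imaginary
  have hφx : (φ x) ^ 2 = (-d : ℂ) := by
    have := congrArg φ hx
    rw [map_pow] at this
    rw [this]
    simp [φ, φA]
  have hstar : star (φ x) = - φ x := by
    have h2 : (star (φ x)) ^ 2 = (φ x) ^ 2 := by
      rw [← star_pow, hφx]; simp
    rcases sq_eq_sq_iff_eq_or_eq_neg.mp h2 with h | h
    · exfalso
      have him : (φ x).im = 0 := by
        have := Complex.conj_eq_iff_im.mp h
        exact this
      have hre : ((φ x).re : ℂ) = φ x := (Complex.conj_eq_iff_re.mp h)
      have : ((φ x).re ^ 2 : ℝ) = -d := by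
        have := hφx
        rw [← hre] at this
        exact_mod_cast this
      have hd' : (0:ℝ) < (d:ℝ) := by exact_mod_cast hd
      nlinarith [sq_nonneg (φ x).re]
    · exact h
  -- the conjugation automorphism
  letI := φ.toAlgebra
  have hst : IsScalarTower ℚ K ℂ := IsScalarTower.of_algebraMap_eq' (by
    ext r
    simp [RingHom.algebraMap_toAlgebra, φ, φA])
  have hcomm : ∀ r : ℚ, (star φ) ((algebraMap ℚ K) r) = (algebraMap ℚ ℂ) r := by
    intro r
    show star (φA ((algebraMap ℚ K) r)) = (algebraMap ℚ ℂ) r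
    rw [φA.commutes r]
    simp
  let φ' : K →ₐ[ℚ] ℂ := { star φ with commutes' := hcomm }
  let σ : K ≃ₐ[ℚ] K := AlgHom.restrictNormal' φ' K
  have hconj : ComplexEmbedding.IsConj φ σ :=
    (RingHom.ext <| AlgHom.restrictNormal_commutes φ' K).symm
  have hσx : σ x = -x := by
    apply φ.injective
    rw [map_neg]
    rw [hconj.eq x, hstar]
  have hσ2 : σ ^ 2 = 1 := by
    ext y
    have h1 : φ (σ (σ y)) = φ y := by
      rw [hconj.eq, hconj.eq, star_star]
    have := φ.injective h1
    simpa [pow_two] using this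
  obtain ⟨τ, hτ⟩ := sq_of_cyclic _ hcyc (by rw [← Nat.card_eq_fintype_card, IsGalois.card_aut_eq_finrank, h4]) σ hσ2
  have hτx : τ x = x ∨ τ x = -x := by
    have h2 : (τ x) ^ 2 = x ^ 2 := by
      rw [← map_pow, hx, AlgEquiv.commutes]
    exact sq_eq_sq_iff_eq_or_eq_neg.mp h2
  have hx0 : x ≠ 0 := by
    intro h
    rw [h, map_zero] at hφx
    norm_num at hφx
    exact absurd (by exact_mod_cast hφx : d = 0) (ne_of_gt hd)
  have : σ x = x := by
    rw [← hτ]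
    rcases hτx with h | h <;> simp [pow_two, h, map_neg]
  rw [hσx] at this
  exact hx0 (by linear_combination (this : -x = x) / (-2) )

/-- A cyclic quartic extension of `ℚ` contains neither `ℚ(i)` nor `ℚ(√-3)`:
no element of `K` squares to `-1` or to `-3`. -/
theorem stmt_2 (K : Type) [Field K] [NumberField K] (h4 : Module.finrank ℚ K = 4)
    [IsGalois ℚ K] (hcyc : IsCyclic (K ≃ₐ[ℚ] K)) :
    (∀ x : K, x ^ 2 ≠ -1) ∧ (∀ x : K, x ^ 2 ≠ -3) := by
  constructor
  · intro x hx
    exact key K h4 hcyc 1 one_pos x (by rw [hx]; simp)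
  · intro x hx
    exact key K h4 hcyc 3 (by norm_num) x (by rw [hx]; simp)
end

section
/- Let K be a field of characteristic not 2 or 3 and E : y² = (x−α)(x−β)(x−γ) an elliptic curve with α, β, γ ∈ K. For P = (x, y) ∈ E(K), there exists Q ∈ E(K) with 2Q = P if and only if x−α, x−β, and x−γ are all squares in K. -/
open WeierstrassCurve

private lemma some_eq_some'' {K : Type} [Field K] {W : WeierstrassCurve.Affine K}
    {x₁ y₁ x₂ y₂ : K} (h₁ : W.Nonsingular x₁ y₁) (h₂ : W.Nonsingular x₂ y₂)
    (hx : x₁ = x₂) (hy : y₁ = y₂) :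
    WeierstrassCurve.Affine.Point.some _ _ h₁ = WeierstrassCurve.Affine.Point.some _ _ h₂ := by
  subst hx; subst hy; rfl

open Classical in
/-- Knapp's halving criterion: for `E : y² = (x-α)(x-β)(x-γ)` over a field `K` of
characteristic not 2 or 3 and a point `P = (x, y) ∈ E(K)`, there is `Q ∈ E(K)` with
`2Q = P` if and only if `x-α`, `x-β`, `x-γ` are all squares in `K`. -/
theorem stmt_6 (K : Type) [Field K] (h2 : (2 : K) ≠ 0) (h3 : (3 : K) ≠ 0)
    (α β γ x y : K) (hαβ : α ≠ β) (hβγ : β ≠ γ) (hαγ : α ≠ γ)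
    (W : WeierstrassCurve.Affine K)
    (hW : W = { a₁ := 0, a₂ := -(α + β + γ), a₃ := 0,
                a₄ := α * β + β * γ + γ * α, a₆ := -(α * β * γ) })
    (h : W.Nonsingular x y) :
    (∃ Q : W.Point, 2 • Q = WeierstrassCurve.Affine.Point.some _ _ h) ↔
      (IsSquare (x - α) ∧ IsSquare (x - β) ∧ IsSquare (x - γ)) := by
  have ha1 : W.a₁ = 0 := by rw [hW]
  have ha2 : W.a₂ = -(α + β + γ) := by rw [hW]
  have ha3 : W.a₃ = 0 := by rw [hW]
  have ha4 : W.a₄ = α * β + β * γ + γ * α := by rw [hW]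
  have ha6 : W.a₆ = -(α * β * γ) := by rw [hW]
  have hnegY : ∀ a b : K, W.negY a b = -b := by
    intro a b; rw [Affine.negY, ha1, ha3]; ring
  constructor
  · rintro ⟨Q, hQ⟩
    rcases Q with _ | @⟨x₀, y₀, h₀⟩
    · rw [← Affine.Point.zero_def, smul_zero] at hQ
      exact absurd hQ.symm (Affine.Point.some_ne_zero h)
    · by_cases hy0 : y₀ = W.negY x₀ y₀
      · rw [two_nsmul, Affine.Point.add_self_of_Y_eq hy0] at hQ
        exact absurd hQ.symm (Affine.Point.some_ne_zero h)
      · rw [two_nsmul, Affine.Point.add_self_of_Y_ne hy0] at hQ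
        obtain ⟨hx, hy⟩ := Affine.Point.some.inj hQ
        have hy0' : y₀ ≠ 0 := by
          intro h0
          exact hy0 (by rw [hnegY, h0, neg_zero])
        have h2y : (2 : K) * y₀ ≠ 0 := mul_ne_zero h2 hy0'
        have heq : y₀ ^ 2 = (x₀ - α) * (x₀ - β) * (x₀ - γ) := by
          have h' := (W.equation_iff x₀ y₀).mp h₀.1
          rw [ha1, ha2, ha3, ha4, ha6] at h'
          linear_combination h'
        have hslope : W.slope x₀ x₀ y₀ y₀ =
            (3 * x₀ ^ 2 - 2 * (α + β + γ) * x₀ + (α * β + β * γ + γ * α)) / (2 * y₀) := by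
          rw [Affine.slope_of_Y_ne rfl hy0, hnegY, ha1, ha2, ha4, sub_neg_eq_add, ← two_mul]
          ring_nf
        have hx' : (x + 2 * x₀ - (α + β + γ)) * (2 * y₀) ^ 2 =
            (3 * x₀ ^ 2 - 2 * (α + β + γ) * x₀ + (α * β + β * γ + γ * α)) ^ 2 := by
          rw [← hx, Affine.addX, hslope, ha1, ha2]
          field_simp
          ring
        refine ⟨⟨((x₀ - α) ^ 2 - (α - β) * (α - γ)) / (2 * y₀), ?_⟩,
          ⟨((x₀ - β) ^ 2 - (β - α) * (β - γ)) / (2 * y₀), ?_⟩,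
          ⟨((x₀ - γ) ^ 2 - (γ - α) * (γ - β)) / (2 * y₀), ?_⟩⟩
        · rw [div_mul_div_comm, eq_div_iff (mul_ne_zero h2y h2y)]
          linear_combination hx' + (4 * (β + γ - 2 * x₀)) * heq
        · rw [div_mul_div_comm, eq_div_iff (mul_ne_zero h2y h2y)]
          linear_combination hx' + (4 * (α + γ - 2 * x₀)) * heq
        · rw [div_mul_div_comm, eq_div_iff (mul_ne_zero h2y h2y)]
          linear_combination hx' + (4 * (α + β - 2 * x₀)) * heq
  · rintro ⟨⟨r, hr⟩, ⟨s, hs⟩, ⟨t, ht⟩⟩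
    have hα : α = x - r * r := by linear_combination -hr
    have hβ : β = x - s * s := by linear_combination -hs
    have hγ : γ = x - t * t := by linear_combination -ht
    subst hα; subst hβ; subst hγ
    have hrs : r + s ≠ 0 := fun h0 => hαβ (by linear_combination (s - r) * h0)
    have hst : s + t ≠ 0 := fun h0 => hβγ (by linear_combination (t - s) * h0)
    have hrt : r + t ≠ 0 := fun h0 => hαγ (by linear_combination (t - r) * h0)
    set x₀ := x + (r * s + s * t + t * r) with hx₀def
    set y₀ := (r + s) * (s + t) * (r + t) with hy₀def
    have hy₀ : y₀ ≠ 0 := mul_ne_zero (mul_ne_zero hrs hst) hrt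
    have h2y : (2 : K) * y₀ ≠ 0 := mul_ne_zero h2 hy₀
    have heq0 : W.Equation x₀ y₀ := by
      rw [W.equation_iff, ha1, ha2, ha3, ha4, ha6, hx₀def, hy₀def]
      ring
    have hy0ne : y₀ ≠ W.negY x₀ y₀ := by
      rw [hnegY]
      intro hc
      have h20 : (2 : K) * y₀ = 0 := by linear_combination hc
      exact hy₀ ((mul_eq_zero.mp h20).resolve_left h2)
    have h₀ : W.Nonsingular x₀ y₀ := by
      rw [W.nonsingular_iff]
      refine ⟨heq0, Or.inr ?_⟩
      rw [ha1, ha3]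
      intro hc
      have h20 : (2 : K) * y₀ = 0 := by linear_combination hc
      exact hy₀ ((mul_eq_zero.mp h20).resolve_left h2)
    have hslope : W.slope x₀ x₀ y₀ y₀ =
        (3 * x₀ ^ 2 - 2 * ((x - r * r) + (x - s * s) + (x - t * t)) * x₀ +
          ((x - r * r) * (x - s * s) + (x - s * s) * (x - t * t) + (x - t * t) * (x - r * r))) /
          (2 * y₀) := by
      rw [Affine.slope_of_Y_ne rfl hy0ne, hnegY, ha1, ha2, ha4, sub_neg_eq_add, ← two_mul]
      ring_nf
    have hX : W.addX x₀ x₀ (W.slope x₀ x₀ y₀ y₀) = x := by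
      rw [Affine.addX, hslope, ha1, ha2, hx₀def, hy₀def]
      field_simp
      ring
    have hSeq : W.Equation x (W.addY x₀ x₀ y₀ (W.slope x₀ x₀ y₀ y₀)) := by
      have hE := (Affine.nonsingular_add h₀ h₀ fun hc => hy0ne hc.2).1
      rwa [hX] at hE
    rcases Affine.Y_eq_of_X_eq hSeq h.1 rfl with hY | hY
    · refine ⟨Affine.Point.some _ _ h₀, ?_⟩
      rw [two_nsmul, Affine.Point.add_self_of_Y_ne hy0ne]
      exact some_eq_some'' _ _ hX hY
    · refine ⟨-Affine.Point.some _ _ h₀, ?_⟩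
      rw [two_nsmul, ← neg_add, Affine.Point.add_self_of_Y_ne hy0ne, Affine.Point.neg_some]
      refine some_eq_some'' _ _ hX ?_
      rw [hX, hY, Affine.negY_negY]
end

section
/- Let E : y² = x(x² + bx + c) be an elliptic curve over ℚ with c a rational square, so that E has a ℚ-rational point P = (d, y₀) of order 4 with d² = c. Suppose m := b² − 4c is not a rational square and P is halved in a cyclic quartic extension K of ℚ containing F = ℚ(√m). Then 3d² ± 10td − 5t² = 0 for some t ∈ ℚ with m = 20t², which has no solution with d ∈ ℚ, d ≠ 0; hence no such configuration exists. -/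
open WeierstrassCurve


lemma three_dvd_of_dvd_sq_add_sq (a d : ℤ) (h : (3:ℤ) ∣ a^2 + d^2) : (3:ℤ) ∣ a ∧ (3:ℤ) ∣ d := by
  have key : ∀ x y : ZMod 3, x^2 + y^2 = 0 → x = 0 ∧ y = 0 := by decide
  rw [show (3:ℤ) = ((3:ℕ):ℤ) by norm_num] at h ⊢
  rw [← ZMod.intCast_zmod_eq_zero_iff_dvd] at h
  push_cast at h
  obtain ⟨h1, h2⟩ := key _ _ h
  rw [show ((3:ℕ):ℤ) ∣ a ↔ _ from (ZMod.intCast_zmod_eq_zero_iff_dvd a 3).symm]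
  rw [show ((3:ℕ):ℤ) ∣ d ↔ _ from (ZMod.intCast_zmod_eq_zero_iff_dvd d 3).symm]
  exact ⟨h1, h2⟩

def Ssys (p q : ℤ) : Prop := ∃ z w : ℤ, p^2 + q^2 = z^2 ∧ p^2 + 4*q^2 = w^2

-- the four-way gcd splitting, in ℕ
lemma nat_split (M N U V : ℕ) (hco1 : M.Coprime N) (hco2 : U.Coprime V)
    (hmul : M * N = U * V) :
    M.gcd U * M.gcd V = M ∧ N.gcd U * N.gcd V = N ∧
      M.gcd U * N.gcd U = U ∧ M.gcd V * N.gcd V = V := by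
  refine ⟨(Nat.gcd_mul_gcd_eq_iff_dvd_mul_of_coprime hco2).mpr ⟨N, hmul.symm⟩,
    (Nat.gcd_mul_gcd_eq_iff_dvd_mul_of_coprime hco2).mpr ⟨M, by rw [← hmul]; ring⟩, ?_, ?_⟩
  · have := (Nat.gcd_mul_gcd_eq_iff_dvd_mul_of_coprime hco1).mpr (⟨V, hmul⟩ : U ∣ M * N)
    rwa [Nat.gcd_comm U M, Nat.gcd_comm U N] at this
  · have := (Nat.gcd_mul_gcd_eq_iff_dvd_mul_of_coprime hco1).mpr
      (⟨U, by rw [mul_comm U V] at hmul; rw [hmul]⟩ : V ∣ M * N)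
    rwa [Nat.gcd_comm V M, Nat.gcd_comm V N] at this

lemma descent_core (m N u v : ℤ) (hm : m ≠ 0) (hN : N ≠ 0)
    (hco1 : Int.gcd m N = 1) (hco2 : Int.gcd u v = 1)
    (hmul : m * N = u * v) (heq : m^2 - 4*N^2 = u^2 - v^2) :
    ∃ a d : ℤ, a ≠ 0 ∧ d ≠ 0 ∧ Int.gcd a d = 1 ∧ Ssys a d ∧ a^2 + d^2 ≤ m^2 + N^2 := by
  have hMul : m.natAbs * N.natAbs = u.natAbs * v.natAbs := by
    rw [← Int.natAbs_mul, ← Int.natAbs_mul, hmul]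
  obtain ⟨hMAB, hNCD, hUAC, hVBD⟩ := nat_split _ _ _ _ hco1 hco2 hMul
  obtain ⟨A, hA⟩ : ∃ x : ℕ, x = Nat.gcd m.natAbs u.natAbs := ⟨_, rfl⟩
  obtain ⟨B, hB⟩ : ∃ x : ℕ, x = Nat.gcd m.natAbs v.natAbs := ⟨_, rfl⟩
  obtain ⟨C, hC⟩ : ∃ x : ℕ, x = Nat.gcd N.natAbs u.natAbs := ⟨_, rfl⟩
  obtain ⟨D, hD⟩ : ∃ x : ℕ, x = Nat.gcd N.natAbs v.natAbs := ⟨_, rfl⟩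
  rw [← hA, ← hB] at hMAB
  rw [← hC, ← hD] at hNCD
  rw [← hA, ← hC] at hUAC
  rw [← hB, ← hD] at hVBD
  have hM0 : m.natAbs ≠ 0 := Int.natAbs_ne_zero.mpr hm
  have hN0 : N.natAbs ≠ 0 := Int.natAbs_ne_zero.mpr hN
  have hA0 : A ≠ 0 := by rintro rfl; exact hM0 (by simpa using hMAB.symm)
  have hB0 : B ≠ 0 := by rintro rfl; exact hM0 (by simpa using hMAB.symm)
  have hC0 : C ≠ 0 := by rintro rfl; exact hN0 (by simpa using hNCD.symm)
  have hD0 : D ≠ 0 := by rintro rfl; exact hN0 (by simpa using hNCD.symm)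
  have hcoAD : Nat.Coprime A D := by
    rw [hA, hD]
    exact Nat.Coprime.coprime_dvd_right (Nat.gcd_dvd_right _ _)
      (Nat.Coprime.coprime_dvd_left (Nat.gcd_dvd_right _ _) hco2)
  have hcoBC : Nat.Coprime B C := by
    rw [hB, hC]
    exact Nat.Coprime.coprime_dvd_right (Nat.gcd_dvd_left _ _)
      (Nat.Coprime.coprime_dvd_left (Nat.gcd_dvd_left _ _) hco1)
  have hm2 : m^2 = ((A:ℤ) * B)^2 := by
    have : ((m.natAbs : ℤ))^2 = m^2 := Int.natAbs_sq m
    rw [← this, ← hMAB]; push_cast; ring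
  have hN2 : N^2 = ((C:ℤ) * D)^2 := by
    have : ((N.natAbs : ℤ))^2 = N^2 := Int.natAbs_sq N
    rw [← this, ← hNCD]; push_cast; ring
  have hu2 : u^2 = ((A:ℤ) * C)^2 := by
    have : ((u.natAbs : ℤ))^2 = u^2 := Int.natAbs_sq u
    rw [← this, ← hUAC]; push_cast; ring
  have hv2 : v^2 = ((B:ℤ) * D)^2 := by
    have : ((v.natAbs : ℤ))^2 = v^2 := Int.natAbs_sq v
    rw [← this, ← hVBD]; push_cast; ring
  obtain ⟨a, ha⟩ : ∃ x : ℤ, x = (A:ℤ) := ⟨_, rfl⟩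
  obtain ⟨b, hb⟩ : ∃ x : ℤ, x = (B:ℤ) := ⟨_, rfl⟩
  obtain ⟨c, hc⟩ : ∃ x : ℤ, x = (C:ℤ) := ⟨_, rfl⟩
  obtain ⟨d, hd⟩ : ∃ x : ℤ, x = (D:ℤ) := ⟨_, rfl⟩
  rw [← ha, ← hb] at hm2
  rw [← hc, ← hd] at hN2
  rw [← ha, ← hc] at hu2
  rw [← hb, ← hd] at hv2
  have hkey : b^2 * (a^2 + d^2) = c^2 * (a^2 + 4*d^2) := by
    have h := heq
    rw [hm2, hN2, hu2, hv2] at h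
    linear_combination h
  have haz : a ≠ 0 := by rw [ha]; exact_mod_cast Int.natCast_ne_zero.mpr hA0
  have hbz : b ≠ 0 := by rw [hb]; exact_mod_cast Int.natCast_ne_zero.mpr hB0
  have hcz : c ≠ 0 := by rw [hc]; exact_mod_cast Int.natCast_ne_zero.mpr hC0
  have hdz : d ≠ 0 := by rw [hd]; exact_mod_cast Int.natCast_ne_zero.mpr hD0
  have hcoADZ : IsCoprime a d := by
    rw [ha, hd, Int.isCoprime_iff_gcd_eq_one, Int.gcd_natCast_natCast]; exact hcoAD
  have hcoBCZ : IsCoprime b c := by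
    rw [hb, hc, Int.isCoprime_iff_gcd_eq_one, Int.gcd_natCast_natCast]; exact hcoBC
  have hdvd : c^2 ∣ a^2 + d^2 := by
    have h1 : c^2 ∣ b^2 * (a^2+d^2) := ⟨a^2+4*d^2, hkey⟩
    exact (IsCoprime.pow (hcoBCZ.symm)).dvd_of_dvd_mul_left h1
  obtain ⟨k, hk⟩ := hdvd
  have hk2 : b^2 * k = a^2 + 4*d^2 := by
    have h2 : c^2 * (b^2 * k) = c^2 * (a^2+4*d^2) := by rw [← hkey, hk]; ring
    exact mul_left_cancel₀ (pow_ne_zero 2 hcz) h2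
  have hkpos : 0 < k := by
    have h1 : 0 < a^2 + d^2 := by positivity
    have h2 : 0 < c^2 := by positivity
    rcases le_or_gt k 0 with hle | hlt
    · exfalso
      have : c^2 * k ≤ 0 := mul_nonpos_of_nonneg_of_nonpos (le_of_lt h2) hle
      rw [← hk] at this; linarith
    · exact hlt
  have hcodk : IsCoprime d k := by
    have h1 : IsCoprime d (a^2 + d * d) := (hcoADZ.symm.pow_right (n := 2)).add_mul_left_right d
    have h2 : IsCoprime d (c^2 * k) := by
      have : a^2 + d * d = c^2 * k := by rw [← hk]; ring
      rwa [this] at h1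
    exact h2.of_isCoprime_of_dvd_right ⟨c^2, by ring⟩
  have hk3 : k ∣ 3 := by
    have h3 : 3 * d^2 = k * (b^2 - c^2) := by
      have e1 : c^2 * k = a^2 + d^2 := hk.symm
      linear_combination e1 - hk2
    have hdvd3 : k ∣ 3 * d^2 := ⟨b^2 - c^2, h3⟩
    exact (hcodk.symm.pow_right (n := 2)).dvd_of_dvd_mul_right hdvd3
  have hkle : k ≤ 3 := Int.le_of_dvd (by norm_num) hk3
  have hk13 : k = 1 ∨ k = 3 := by
    interval_cases k <;> omega
  rcases hk13 with rfl | rfl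
  · refine ⟨a, d, haz, hdz, ?_, ⟨c, b, ?_, ?_⟩, ?_⟩
    · rw [ha, hd, Int.gcd_natCast_natCast]; exact hcoAD
    · rw [hk]; ring
    · rw [← hk2]; ring
    · have h3 : A ≤ m.natAbs := Nat.le_of_dvd (Nat.pos_of_ne_zero hM0) ⟨B, hMAB.symm⟩
      have h4 : D ≤ N.natAbs := Nat.le_of_dvd (Nat.pos_of_ne_zero hN0) ⟨C, by rw [← hNCD]; ring⟩
      have h5 : a^2 ≤ m^2 := by
        rw [← Int.natAbs_sq m, ha]
        exact pow_le_pow_left₀ (by positivity) (by exact_mod_cast h3) 2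
      have h6 : d^2 ≤ N^2 := by
        rw [← Int.natAbs_sq N, hd]
        exact pow_le_pow_left₀ (by positivity) (by exact_mod_cast h4) 2
      linarith
  · exfalso
    have h3 : (3:ℤ) ∣ a^2 + d^2 := ⟨c^2, by rw [hk]; ring⟩
    obtain ⟨ha3, hd3⟩ := three_dvd_of_dvd_sq_add_sq a d h3
    have : IsUnit (3:ℤ) := hcoADZ.isUnit_of_dvd' ha3 hd3
    rw [Int.isUnit_iff] at this
    omega




lemma one_le_sq (x : ℤ) (h : x ≠ 0) : 1 ≤ x^2 := by
  have h1 : 1 ≤ |x| := Int.one_le_abs h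
  have h2 : 1*1 ≤ |x| * |x| := mul_le_mul h1 h1 (by norm_num) (by linarith)
  have h3 : |x| * |x| = x^2 := by rw [abs_mul_abs_self]; ring
  linarith

lemma bound_lemma (a d n M p q : ℤ) (hbd : a^2+d^2 ≤ n^2+M^2) (hp : 1 ≤ p^2)
    (hq : q^2 = 4*(n^2*M^2)) (hn : 1 ≤ n^2) (hM : 1 ≤ M^2) : a^2+d^2 < p^2+q^2 := by
  nlinarith [mul_nonneg (by linarith : (0:ℤ) ≤ n^2 - 1) (by linarith : (0:ℤ) ≤ M^2 - 1)]

lemma odd_coprime_two (p : ℤ) (h : Odd p) : IsCoprime p 2 := by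
  rw [Int.isCoprime_iff_gcd_eq_one]
  have hd : (Int.gcd p 2) ∣ 2 := by
    have h2 : (↑(Int.gcd p 2) : ℤ) ∣ (2:ℤ) := Int.gcd_dvd_right _ _
    exact_mod_cast h2
  have hle : Int.gcd p 2 ≤ 2 := Nat.le_of_dvd (by norm_num) hd
  have hne : Int.gcd p 2 ≠ 2 := by
    intro h2
    have h3 : (↑(Int.gcd p 2) : ℤ) ∣ p := Int.gcd_dvd_left _ _
    rw [h2] at h3
    rw [Int.odd_iff] at h
    omega
  have hg0 : Int.gcd p 2 ≠ 0 := by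
    intro h0
    rw [Int.gcd_eq_zero_iff] at h0
    norm_num at h0
  omega

theorem noSsys : ∀ n : ℕ, ∀ p q : ℤ, (p^2 + q^2).toNat ≤ n →
    p ≠ 0 → q ≠ 0 → Int.gcd p q = 1 → ¬ Ssys p q := by
  intro n
  induction n using Nat.strong_induction_on with
  | _ n ih =>
    intro p q hn hp hq hco hS
    obtain ⟨z, w, hz, hw⟩ := hS
    have key : ∀ p' q' : ℤ, p' ≠ 0 → q' ≠ 0 → Int.gcd p' q' = 1 →
        (p'^2 + q'^2) < (p^2+q^2) → ¬ Ssys p' q' := by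
      intro p' q' h1 h2 h3 h4
      have hnn : (0:ℤ) ≤ p'^2 + q'^2 := by positivity
      have h5 : (p'^2 + q'^2).toNat < n := by omega
      exact ih _ h5 p' q' le_rfl h1 h2 h3
    rcases Int.even_or_odd p with hpe | hpo
    · -- p even: descend to (q, P) where p = 2P
      obtain ⟨P, hP⟩ := hpe
      have hP' : p = 2 * P := by omega
      have hPne : P ≠ 0 := by intro h0; rw [h0] at hP'; simp at hP'; exact hp hP'
      have hweven : Even w := by
        have h4 : w^2 = 4*(P^2 + q^2) := by rw [← hw, hP']; ring
        have he : Even (w^2) := ⟨2*(P^2+q^2), by rw [h4]; ring⟩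
        exact (Int.even_pow.mp he).1
      obtain ⟨w1, hw1⟩ := hweven
      have hcoqP : Int.gcd q P = 1 := by
        rw [Int.isCoprime_iff_gcd_eq_one.symm]
        have h0 : IsCoprime p q := Int.isCoprime_iff_gcd_eq_one.symm.mp hco
        exact (h0.symm).of_isCoprime_of_dvd_right ⟨2, by omega⟩
      have hlt : q^2 + P^2 < p^2 + q^2 := by
        have hP2 : P^2 < p^2 := by
          rw [hP']
          nlinarith [one_le_sq P hPne]
        linarith
      refine key q P hq hPne hcoqP hlt ⟨w1, z, ?_, ?_⟩
      · have hww : (2*P)^2 + 4*q^2 = (w1+w1)^2 := by rw [← hP', ← hw1]; exact hw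
        linarith [hww]
      · rw [← hz, hP']; ring
    · -- p odd
      have hcoP : IsCoprime p q := Int.isCoprime_iff_gcd_eq_one.symm.mp hco
      have ht1 : PythagoreanTriple p (2*q) w := by
        have h1 : p*p + (2*q)*(2*q) = w*w := by linear_combination hw
        exact h1
      have hco2q : Int.gcd p (2*q) = 1 := by
        rw [Int.isCoprime_iff_gcd_eq_one.symm]
        exact (odd_coprime_two p hpo).mul_right hcoP
      obtain ⟨m, n, hmn1, _, hmnco, hmnpar⟩ :=
        (PythagoreanTriple.coprime_classification.mp ⟨ht1, hco2q⟩)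
      have hpodd : ¬ Even p := Int.not_even_iff_odd.mpr hpo
      rcases hmn1 with ⟨hpm, hq2⟩ | ⟨hpm, _⟩
      swap
      · exact absurd ⟨m*n, by linarith⟩ hpodd
      have hqmn : q = m * n := by linarith [hq2]
      have ht2 : PythagoreanTriple p q z := by
        have h1 : p*p + q*q = z*z := by linear_combination hz
        exact h1
      obtain ⟨u, v, huv1, _, huvco, _⟩ :=
        (PythagoreanTriple.coprime_classification.mp ⟨ht2, hco⟩)
      rcases huv1 with ⟨hpu, hquv⟩ | ⟨hpu, _⟩
      swap
      · exact absurd ⟨u*v, by linarith⟩ hpodd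
      have hmne : m ≠ 0 := by intro h0; rw [h0] at hqmn; simp at hqmn; exact hq hqmn
      have hnne : n ≠ 0 := by intro h0; rw [h0] at hqmn; simp at hqmn; exact hq hqmn
      have hp2 : 1 ≤ p^2 := one_le_sq p hp
      rcases hmnpar with ⟨hm2, hn2⟩ | ⟨hm2, hn2⟩
      · -- m even, m = 2M; core with (n, M, v, u)
        obtain ⟨M, hM⟩ : ∃ M, m = 2*M := ⟨m/2, by omega⟩
        have hMne : M ≠ 0 := by intro h0; rw [h0] at hM; omega
        rw [hM] at hqmn
        have hmulc : n * M = v * u := by linarith [hquv, hqmn]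
        have heqc : n^2 - 4*M^2 = v^2 - u^2 := by
          have h1 : p = (2*M)^2 - n^2 := by rw [← hM]; exact hpm
          linear_combination h1 - hpu
        have hcon : Int.gcd n M = 1 := by
          rw [Int.isCoprime_iff_gcd_eq_one.symm]
          have h0 : IsCoprime m n := Int.isCoprime_iff_gcd_eq_one.symm.mp hmnco
          exact (h0.symm).of_isCoprime_of_dvd_right ⟨2, by omega⟩
        have hcovu : Int.gcd v u = 1 := by rw [Int.gcd_comm]; exact huvco
        obtain ⟨a, d, ha0, hd0, hcoad, hSad, hbd⟩ :=
          descent_core n M v u hnne hMne hcon hcovu hmulc heqc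
        have hq2' : q^2 = 4*(n^2*M^2) := by rw [hqmn]; ring
        exact key a d ha0 hd0 hcoad
          (bound_lemma a d n M p q hbd hp2 hq2' (one_le_sq n hnne) (one_le_sq M hMne)) hSad
      · -- n even, n = 2N; core with (m, N, u, v)
        obtain ⟨N, hN⟩ : ∃ N, n = 2*N := ⟨n/2, by omega⟩
        have hNne : N ≠ 0 := by intro h0; rw [h0] at hN; omega
        rw [hN] at hqmn
        have hmulc : m * N = u * v := by linarith [hqmn, hquv]
        have heqc : m^2 - 4*N^2 = u^2 - v^2 := by
          have h1 : p = m^2 - (2*N)^2 := by rw [← hN]; exact hpm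
          linear_combination hpu - h1
        have hcom : Int.gcd m N = 1 := by
          rw [Int.isCoprime_iff_gcd_eq_one.symm]
          have h0 : IsCoprime m n := Int.isCoprime_iff_gcd_eq_one.symm.mp hmnco
          exact h0.of_isCoprime_of_dvd_right ⟨2, by omega⟩
        obtain ⟨a, d, ha0, hd0, hcoad, hSad, hbd⟩ :=
          descent_core m N u v hmne hNne hcom huvco hmulc heqc
        have hq2' : q^2 = 4*(m^2*N^2) := by rw [hqmn]; ring
        exact key a d ha0 hd0 hcoad
          (bound_lemma a d m N p q hbd hp2 hq2' (one_le_sq m hmne) (one_le_sq N hNne)) hSad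




theorem main_descent (p q V : ℤ) (h : (p^2 + q^2) * (p^2 + 4*q^2) = V^2) :
    p = 0 ∨ q = 0 := by
  by_contra hc
  push_neg at hc
  obtain ⟨hp, hq⟩ := hc
  -- reduce to coprime
  obtain ⟨g, p', q', hg0, hco', hp', hq'⟩ :
      ∃ (g : ℤ) (p' q' : ℤ), g ≠ 0 ∧ Int.gcd p' q' = 1 ∧ p = g * p' ∧ q = g * q' := by
    refine ⟨Int.gcd p q, p / Int.gcd p q, q / Int.gcd p q, ?_, ?_, ?_, ?_⟩
    · have : Int.gcd p q ≠ 0 := fun h0 => hp (Int.gcd_eq_zero_iff.mp h0).1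
      exact_mod_cast Int.natCast_ne_zero.mpr this
    · exact Int.gcd_div_gcd_div_gcd (Int.gcd_pos_of_ne_zero_left q hp)
    · rw [Int.mul_ediv_cancel' (Int.gcd_dvd_left _ _)]
    · rw [Int.mul_ediv_cancel' (Int.gcd_dvd_right _ _)]
  have hp'0 : p' ≠ 0 := fun h0 => hp (by rw [hp', h0, mul_zero])
  have hq'0 : q' ≠ 0 := fun h0 => hq (by rw [hq', h0, mul_zero])
  -- equation for p', q'
  have heq : (g^2)^2 * ((p'^2 + q'^2) * (p'^2 + 4*q'^2)) = V^2 := by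
    rw [← h, hp', hq']; ring
  have hdvd : g^2 ∣ V := by
    have h1 : (g^2)^2 ∣ V^2 := ⟨(p'^2+q'^2)*(p'^2+4*q'^2), heq.symm⟩
    exact (Int.pow_dvd_pow_iff (by norm_num)).mp h1
  obtain ⟨V', hV'⟩ := hdvd
  have heq2 : (p'^2 + q'^2) * (p'^2 + 4*q'^2) = V'^2 := by
    have h2 : (g^2)^2 * ((p'^2 + q'^2) * (p'^2 + 4*q'^2)) = (g^2)^2 * V'^2 := by
      rw [heq, hV']; ring
    exact mul_left_cancel₀ (pow_ne_zero 2 (pow_ne_zero 2 hg0)) h2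
  -- the two factors are coprime
  have hcoAB : IsCoprime (p'^2 + q'^2) (p'^2 + 4*q'^2) := by
    rw [← Int.isCoprime_iff_gcd_eq_one.symm]
    set G := Int.gcd (p'^2 + q'^2) (p'^2 + 4*q'^2) with hG
    have hd1 : (G : ℤ) ∣ p'^2 + q'^2 := Int.gcd_dvd_left _ _
    have hd2 : (G : ℤ) ∣ p'^2 + 4*q'^2 := Int.gcd_dvd_right _ _
    have hd3 : (G : ℤ) ∣ 3*q'^2 := by
      have : (3:ℤ)*q'^2 = (p'^2 + 4*q'^2) - (p'^2 + q'^2) := by ring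
      rw [this]; exact dvd_sub hd2 hd1
    have hd4 : (G : ℤ) ∣ 3*p'^2 := by
      have : (3:ℤ)*p'^2 = 4*(p'^2 + q'^2) - (p'^2 + 4*q'^2) := by ring
      rw [this]; exact dvd_sub (Dvd.dvd.mul_left hd1 4) hd2
    have hcosq : IsCoprime (p'^2) (q'^2) :=
      (Int.isCoprime_iff_gcd_eq_one.symm.mp hco').pow
    have hd5 : (G : ℤ) ∣ 3 := by
      have h6 : (G:ℤ) ∣ Int.gcd (3*p'^2) (3*q'^2) := Int.dvd_coe_gcd hd4 hd3
      have h7 : (Int.gcd (3*p'^2) (3*q'^2) : ℤ) = 3 * Int.gcd (p'^2) (q'^2) := by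
        have := Int.gcd_mul_left 3 (p'^2) (q'^2)
        rw [this]; push_cast; norm_num
      rw [h7, Int.isCoprime_iff_gcd_eq_one.symm.mpr hcosq] at h6
      simpa using h6
    have hG3 : G ∣ 3 := by exact_mod_cast hd5
    have hGne3 : G ≠ 3 := by
      intro h3
      have h8 : (3:ℤ) ∣ p'^2 + q'^2 := by
        have h8' := hd1
        rw [h3] at h8'
        exact_mod_cast h8'
      obtain ⟨h9, h10⟩ := three_dvd_of_dvd_sq_add_sq p' q' h8
      have : IsUnit (3:ℤ) :=
        (Int.isCoprime_iff_gcd_eq_one.symm.mp hco').isUnit_of_dvd' h9 h10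
      rw [Int.isUnit_iff] at this
      omega
    rcases (Nat.prime_three).eq_one_or_self_of_dvd G hG3 with h | h
    · exact h
    · exact absurd h hGne3
  -- both factors are squares
  obtain ⟨z, hz⟩ := Int.sq_of_isCoprime hcoAB heq2
  obtain ⟨w, hw⟩ := Int.sq_of_isCoprime hcoAB.symm (by rw [← heq2]; ring)
  have hApos : 0 < p'^2 + q'^2 := by positivity
  have hBpos : 0 < p'^2 + 4*q'^2 := by positivity
  have hz' : p'^2 + q'^2 = z^2 := by
    rcases hz with h1 | h1
    · exact h1
    · exfalso; nlinarith [sq_nonneg z]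
  have hw' : p'^2 + 4*q'^2 = w^2 := by
    rcases hw with h1 | h1
    · exact h1
    · exfalso; nlinarith [sq_nonneg w]
  exact noSsys (p'^2 + q'^2).toNat p' q' le_rfl hp'0 hq'0 hco' ⟨z, w, hz', hw'⟩


lemma ratQ (s v : ℚ) (h : (s^2+1)*(s^2+4) = v^2) : s = 0 := by
  set p : ℤ := s.num with hp
  set q : ℤ := (s.den : ℤ) with hq
  have hq0 : (q:ℚ) ≠ 0 := by
    rw [hq]; exact_mod_cast (Nat.cast_ne_zero (R := ℚ)).mpr s.den_nz
  have hs : (s : ℚ) = (p : ℚ) / (q : ℚ) := by rw [hp, hq]; exact_mod_cast (Rat.num_div_den s).symm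
  set V : ℚ := v * (q:ℚ)^2 with hV
  have h2 : ((p:ℚ)^2+(q:ℚ)^2)*((p:ℚ)^2+4*(q:ℚ)^2) = v^2*(q:ℚ)^4 := by
    have h2' : (s^2+1)*(s^2+4) * (q:ℚ)^4 = v^2 * (q:ℚ)^4 := by rw [h]
    rw [hs] at h2'
    field_simp at h2'
    have hq4 : ((q:ℚ)^4) ≠ 0 := pow_ne_zero _ hq0
    apply mul_right_cancel₀ hq4
    linear_combination ((q:ℚ)^4) * h2'
  have hVsq : V^2 = (((p^2 + q^2) * (p^2 + 4*q^2) : ℤ) : ℚ) := by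
    rw [hV]; push_cast; linear_combination (-1 : ℚ) * h2
  have hden : V.den = 1 := by
    have h3 : (V*V).den = 1 := by
      rw [show V*V = V^2 by ring, hVsq]
      exact Rat.den_intCast _
    rw [Rat.mul_self_den] at h3
    exact Nat.eq_one_of_mul_eq_one_right h3
  have hVint : ((V.num : ℚ)) = V := Rat.den_eq_one_iff V |>.mp hden
  have hZ : (p^2 + q^2) * (p^2 + 4*q^2) = V.num^2 := by
    have h4 : ((V.num^2 : ℤ) : ℚ) = V^2 := by push_cast [hVint]; ring
    have h5 := h4.trans hVsq
    exact_mod_cast h5.symm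
  rcases main_descent p q V.num hZ with h5 | h5
  · rw [hp] at h5; exact Rat.num_eq_zero.mp h5
  · exfalso; rw [hq] at h5; exact s.den_nz (by exact_mod_cast h5)

-- main rational arithmetic contradiction
lemma arith_contra (b d r : ℚ) (hd0 : d ≠ 0) (hm : ¬ IsSquare (b^2 - 4*d^2))
    (h : r^2 = (b^2 - 4*d^2) * ((2*d + 2*b)^2 - 4*(b^2 - 4*d^2))) : False := by
  set m : ℚ := b^2 - 4*d^2 with hmdef
  have hm0 : m ≠ 0 := by
    intro h0
    exact hm (h0 ▸ ⟨0, by norm_num⟩)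
  set s : ℚ := r / m with hs
  have hNid : (2*d + 2*b)^2 - 4*m = 4*d*(5*d + 2*b) := by rw [hmdef]; ring
  have hr2 : r^2 = m * (4*d*(5*d + 2*b)) := by rw [← hNid]; exact h
  have hs2 : m * s^2 = 4*d*(5*d + 2*b) := by
    rw [hs, div_pow]
    field_simp
    linear_combination hr2
  rw [hmdef] at hs2
  have hv : ((s^2*b - 4*d)/(2*d))^2 = (s^2+1)*(s^2+4) := by
    field_simp
    linear_combination (s^2) * hs2
  have hsz := ratQ s _ hv.symm
  rw [hsz] at hs2
  have h5 : 5*d + 2*b = 0 := by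
    have := hs2
    simp at this
    rcases this with h1 | h1
    · exact absurd h1 hd0
    · linarith
  have hb : b = -(5*d)/2 := by linarith
  apply hm
  refine ⟨(3*d)/2, ?_⟩
  rw [hmdef, hb]; ring



lemma sq_cases {K : Type} [Field K] (x y : K) (h : x^2 = y^2) : x = y ∨ x = -y := by
  have h0 : (x - y)*(x + y) = 0 := by linear_combination h
  rcases mul_eq_zero.mp h0 with h1 | h1
  · left; linear_combination h1
  · right; linear_combination h1

lemma zpow_fix {K : Type} [Field K] [Algebra ℚ K] (σ : K ≃ₐ[ℚ] K) (x : K)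
    (h : σ x = x) : ∀ k : ℤ, (σ^k) x = x := by
  have hn : ∀ n : ℕ, (σ^n) x = x := by
    intro n
    induction n with
    | zero => simp
    | succ n ih => rw [pow_succ, AlgEquiv.mul_apply, h, ih]
  intro k
  rcases k with n | n
  · rw [Int.ofNat_eq_coe, zpow_natCast]; exact hn n
  · rw [zpow_negSucc]
    have h2 := hn (n+1)
    calc (σ^(n+1))⁻¹ x = (σ^(n+1))⁻¹ ((σ^(n+1)) x) := by rw [h2]
    _ = ((σ^(n+1))⁻¹ * (σ^(n+1))) x := by rw [AlgEquiv.mul_apply]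
    _ = x := by rw [inv_mul_cancel]; simp


/-- Let `E : y² = x(x² + bx + c)` over `ℚ` with `c = d²` a nonzero rational square
(so `P = (d, y₀)` is a rational point of order 4), and `m = b² - 4c` not a square.
Suppose `P` is halved in a cyclic quartic extension `K` of `ℚ` containing
`F = ℚ(√m)`, so that `√d`, `√(2d + 2b - 2√m)` and `√(2d + 2b + 2√m)` all lie in `K`
and generate it. Then no such configuration exists. -/
theorem stmt_19 (W : WeierstrassCurve ℚ) [W.IsElliptic] (b c d : ℚ)
    (hW : W = { a₁ := 0, a₂ := b, a₃ := 0, a₄ := c, a₆ := 0 })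
    (hd : d ^ 2 = c) (hd0 : d ≠ 0)
    (hm : ¬ IsSquare (b ^ 2 - 4 * c))
    (K : Type) [Field K] [NumberField K] (h4 : Module.finrank ℚ K = 4)
    [IsGalois ℚ K] (hcyc : IsCyclic (K ≃ₐ[ℚ] K))
    (sm q₁ q₂ q₃ : K) (hsm : sm ^ 2 = ((b ^ 2 - 4 * c : ℚ) : K))
    (hq₁ : q₁ ^ 2 = (d : K))
    (hq₂ : q₂ ^ 2 = 2 * (d : K) + 2 * (b : K) - 2 * sm)
    (hq₃ : q₃ ^ 2 = 2 * (d : K) + 2 * (b : K) + 2 * sm)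
    (hgen : IntermediateField.adjoin ℚ {sm, q₁, q₂, q₃} = (⊤ : IntermediateField ℚ K)) :
    False := by
  subst hd
  -- cast basics
  have hcast : ∀ x : ℚ, algebraMap ℚ K x = (x : K) := fun x => eq_ratCast _ x
  have hinj : Function.Injective (fun x : ℚ => (x : K)) := Rat.cast_injective
  have hfixcast : ∀ (τ : K ≃ₐ[ℚ] K) (x : ℚ), τ ((x : K)) = (x : K) := by
    intro τ x
    rw [← hcast]
    exact τ.commutes x
  -- the generator
  obtain ⟨σ, hσ⟩ := IsCyclic.exists_generator (α := K ≃ₐ[ℚ] K)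
  have hcard : Nat.card (K ≃ₐ[ℚ] K) = 4 := by
    rw [IsGalois.card_aut_eq_finrank, h4]
  have horder : orderOf σ = 4 := by
    rw [orderOf_eq_card_of_forall_mem_zpowers hσ, hcard]
  -- fixed elements are rational
  have ratfix : ∀ x : K, σ x = x → ∃ r : ℚ, (r : K) = x := by
    intro x hx
    have hx2 : x ∈ IntermediateField.fixedField (⊤ : Subgroup (K ≃ₐ[ℚ] K)) := by
      intro g
      obtain ⟨k, hk⟩ := Subgroup.mem_zpowers_iff.mp (hσ (g : K ≃ₐ[ℚ] K))
      show (g : K ≃ₐ[ℚ] K) • x = x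
      rw [AlgEquiv.smul_def, ← hk]
      exact zpow_fix σ x hx k
    have hbot : IntermediateField.fixedField (⊤ : Subgroup (K ≃ₐ[ℚ] K)) = ⊥ :=
      OrderIso.map_bot (@IsGalois.intermediateFieldEquivSubgroup ℚ _ K _ _ _ _).symm
    rw [hbot, IntermediateField.mem_bot] at hx2
    obtain ⟨r, hr⟩ := hx2
    exact ⟨r, by rw [← hcast]; exact hr⟩
  -- sm is irrational
  have hsm_irr : ∀ r : ℚ, (r : K) ≠ sm := by
    intro r hr
    apply hm
    have h1 : ((r^2 : ℚ) : K) = ((b^2 - 4*d^2 : ℚ) : K) := by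
      push_cast
      rw [hr]
      push_cast at hsm
      linear_combination hsm
    have h2 : r^2 = b^2 - 4*d^2 := hinj h1
    exact ⟨r, by rw [← h2]; ring⟩
  -- σ sm = -sm
  have hσsm : σ sm = -sm := by
    have h1 : (σ sm)^2 = sm^2 := by
      rw [← map_pow, hsm, hfixcast]
    rcases sq_cases _ _ h1 with h2 | h2
    · exfalso
      obtain ⟨r, hr⟩ := ratfix sm h2
      exact hsm_irr r hr
    · exact h2
  -- q₂, q₃ nonzero
  have hq₂ne : q₂ ≠ 0 := by
    intro h0
    apply hsm_irr (d + b)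
    have h1 : (0:K) = 2*(d:K) + 2*(b:K) - 2*sm := by rw [← hq₂, h0]; ring
    push_cast
    linear_combination (-1/2 : K) * h1
  have hq₃ne : q₃ ≠ 0 := by
    intro h0
    apply hsm_irr (-(d + b))
    have h1 : (0:K) = 2*(d:K) + 2*(b:K) + 2*sm := by rw [← hq₃, h0]; ring
    push_cast
    linear_combination (1/2 : K) * h1
  have htne : q₂ * q₃ ≠ 0 := mul_ne_zero hq₂ne hq₃ne
  -- t² is rational
  have ht2 : (q₂*q₃)^2 = (((2*d+2*b)^2 - 4*(b^2-4*d^2) : ℚ) : K) := by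
    have e : (q₂*q₃)^2 = q₂^2 * q₃^2 := by ring
    rw [e, hq₂, hq₃]
    push_cast
    push_cast at hsm
    linear_combination (-4 : K) * hsm
  -- σ (q₂ q₃) = ± q₂ q₃
  have hσt2 : (σ (q₂*q₃))^2 = (q₂*q₃)^2 := by
    rw [← map_pow, ht2, hfixcast]
  -- σ q₂ = ± q₃ and σ q₃ = ± q₂
  have hσq₂ : σ q₂ = q₃ ∨ σ q₂ = -q₃ := by
    apply sq_cases
    rw [← map_pow, hq₂, hq₃, map_sub, map_add, map_mul, map_mul, map_mul, hσsm]
    rw [hfixcast, hfixcast]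
    have h2 : σ (2:K) = 2 := by
      have : ((2:ℚ):K) = (2:K) := by push_cast; ring
      rw [← this, hfixcast, this]
    rw [h2]
    ring
  have hσq₃ : σ q₃ = q₂ ∨ σ q₃ = -q₂ := by
    apply sq_cases
    rw [← map_pow, hq₃, hq₂, map_add, map_add, map_mul, map_mul, map_mul, hσsm]
    rw [hfixcast, hfixcast]
    have h2 : σ (2:K) = 2 := by
      have : ((2:ℚ):K) = (2:K) := by push_cast; ring
      rw [← this, hfixcast, this]
    rw [h2]
    ring
  -- σ² fixes q₁ and sm
  have hσ2sm : σ (σ sm) = sm := by rw [hσsm, map_neg, hσsm]; ring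
  have hσ2q₁ : σ (σ q₁) = q₁ := by
    have h1 : (σ q₁)^2 = q₁^2 := by rw [← map_pow, hq₁, hfixcast, ← hq₁]
    rcases sq_cases _ _ h1 with h2 | h2
    · rw [h2, h2]
    · rw [h2, map_neg, h2]; ring
  -- the main dichotomy
  have two_ne : (2:K) ≠ 0 := two_ne_zero
  rcases sq_cases _ _ hσt2 with hσt | hσt
  · -- σ t = t : then σ² = 1, contradiction with order 4
    have hfixq : σ (σ q₂) = q₂ ∧ σ (σ q₃) = q₃ := by
      rcases hσq₂ with e2 | e2 <;> rcases hσq₃ with e3 | e3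
      · exact ⟨by rw [e2, e3], by rw [e3, e2]⟩
      · exfalso
        have h1 : σ (q₂*q₃) = -(q₂*q₃) := by rw [map_mul, e2, e3]; ring
        rw [hσt] at h1
        apply htne
        have h2 : (2:K) * (q₂*q₃) = 0 := by linear_combination h1
        exact (mul_eq_zero.mp h2).resolve_left two_ne
      · exfalso
        have h1 : σ (q₂*q₃) = -(q₂*q₃) := by rw [map_mul, e2, e3]; ring
        rw [hσt] at h1
        apply htne
        have h2 : (2:K) * (q₂*q₃) = 0 := by linear_combination h1
        exact (mul_eq_zero.mp h2).resolve_left two_ne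
      · exact ⟨by rw [e2, map_neg, e3]; ring, by rw [e3, map_neg, e2]; ring⟩
    -- σ² fixes all generators hence all of K
    have hsub : IntermediateField.adjoin ℚ {sm, q₁, q₂, q₃} ≤
        IntermediateField.fixedField (Subgroup.zpowers (σ^2)) := by
      rw [IntermediateField.adjoin_le_iff]
      have hfix2 : ∀ x : K, σ (σ x) = x → x ∈
          IntermediateField.fixedField (Subgroup.zpowers (σ^2)) := by
        intro x hxx g
        obtain ⟨k, hk⟩ := Subgroup.mem_zpowers_iff.mp g.2
        show (g : K ≃ₐ[ℚ] K) • x = x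
        rw [AlgEquiv.smul_def, ← hk]
        refine zpow_fix (σ^2) x ?_ k
        rw [pow_two, AlgEquiv.mul_apply]
        exact hxx
      intro x hx
      simp only [Set.mem_insert_iff, Set.mem_singleton_iff] at hx
      rcases hx with rfl | rfl | rfl | rfl
      · exact hfix2 _ hσ2sm
      · exact hfix2 _ hσ2q₁
      · exact hfix2 _ hfixq.1
      · exact hfix2 _ hfixq.2
    rw [hgen] at hsub
    have hσ21 : σ^2 = 1 := by
      apply AlgEquiv.ext
      intro x
      have hx : x ∈ IntermediateField.fixedField (Subgroup.zpowers (σ^2)) :=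
        hsub (IntermediateField.mem_top (x := x))
      have h2 := hx ⟨σ^2, Subgroup.mem_zpowers _⟩
      rw [AlgEquiv.one_apply]
      exact h2
    have hdvd : orderOf σ ∣ 2 := orderOf_dvd_of_pow_eq_one hσ21
    rw [horder] at hdvd
    norm_num at hdvd
  · -- σ t = -t : produce rational r with r² = m(A²-4m)
    have hu : σ (q₂*q₃*sm) = q₂*q₃*sm := by
      rw [map_mul, hσt, hσsm]
      ring
    obtain ⟨r, hr⟩ := ratfix _ hu
    have hr2 : ((r^2 : ℚ) : K) =
        (((b^2-4*d^2) * ((2*d+2*b)^2 - 4*(b^2-4*d^2)) : ℚ) : K) := by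
      push_cast
      push_cast at hr
      have h1 : ((r:K))^2 = (q₂*q₃*sm)^2 := by rw [hr]
      have h2 : (q₂*q₃*sm)^2 = (q₂*q₃)^2 * sm^2 := by ring
      rw [h2, ht2, hsm] at h1
      push_cast at h1
      linear_combination h1
    have hrq : r^2 = (b^2-4*d^2) * ((2*d+2*b)^2 - 4*(b^2-4*d^2)) := hinj hr2
    exact arith_contra b d r hd0 hm hrq
end
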